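/- arXiv:1605.08950 — 2 statements merged into one kernel-verified Lean document; each statement's English description precedes it below -/
import Mathlib

section
/- Let (H,X) be a topological dynamical system and let s ≥ 1. Let H_{s+1} denote the (s+1)-th term of the lower central series of H (H_1 = H, H_{i+1} = [H, H_i]). Then for every h ∈ H_{s+1} and every x ∈ X, the pair (x, h.x) belongs to RP^s_H(X); that is, the configuration ∟^{s+1}(x; h.x) is a dynamical cube in C^{s+1}_H(X). -/
/-!
Common definitions: face elements, Host–Kra cube groups, dynamical cubes, and the
regional proximal relation of order `s`, following Gutman–Manners–Varjú.

We model the discrete cube `{0,1}^ℓ` as `Fin ℓ → Bool`.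
-/

open scoped Classical in
/-- The face element `[g]_F ∈ H^{{0,1}^ℓ}`: equal to `g` on `F` and to the identity
elsewhere. -/
noncomputable def faceEl (H : Type*) [Group H] {ℓ : ℕ} (g : H) (F : Set (Fin ℓ → Bool)) :
    (Fin ℓ → Bool) → H :=
  fun ω => if ω ∈ F then g else 1

/-- A hyperface of the discrete cube `{0,1}^ℓ`: a set of the form `{ω | ω i = a}`. -/
def IsHyperface {ℓ : ℕ} (F : Set (Fin ℓ → Bool)) : Prop :=
  ∃ (i : Fin ℓ) (a : Bool), F = {ω | ω i = a}

/-- The Host–Kra cube group `HK^ℓ(H)`: the subgroup of `H^{{0,1}^ℓ}` generated by the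
face elements `[h]_F` with `F` a hyperface. -/
noncomputable def hostKra (H : Type*) [Group H] (ℓ : ℕ) : Subgroup ((Fin ℓ → Bool) → H) :=
  Subgroup.closure {γ | ∃ (g : H) (F : Set (Fin ℓ → Bool)), IsHyperface F ∧ γ = faceEl H g F}

/-- The set of dynamical cubes `C^ℓ_H(X)`: the closure of the orbit of the constant
configurations under the Host–Kra cube group. -/
noncomputable def dynCubes (H : Type*) (X : Type*) [Group H] [TopologicalSpace X]
    [MulAction H X] (ℓ : ℕ) : Set ((Fin ℓ → Bool) → X) :=
  closure {c | ∃ γ ∈ hostKra H ℓ, ∃ x : X, c = fun ω => γ ω • x}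

/-- The corner configuration `∟^ℓ(x;y)`: the configuration whose vertex at `(1,…,1)` is `y`
and all of whose other vertices are `x`. -/
noncomputable def corner {X : Type*} (ℓ : ℕ) (x y : X) : (Fin ℓ → Bool) → X :=
  fun ω => if ω = (fun _ => true) then y else x

/-- The regional proximal relation of order `s`:
`RP^s_H(X) = {(x,y) | ∟^{s+1}(x;y) ∈ C^{s+1}_H(X)}`. -/
noncomputable def RP (H : Type*) (X : Type*) [Group H] [TopologicalSpace X] [MulAction H X]
    (s : ℕ) : Set (X × X) :=
  {p | corner (s + 1) p.1 p.2 ∈ dynCubes H X (s + 1)}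

open scoped commutatorElement

lemma faceEl_commutator (H : Type*) [Group H] {ℓ : ℕ} (a b : H)
    (F₁ F₂ : Set (Fin ℓ → Bool)) :
    faceEl H ⁅a, b⁆ (F₁ ∩ F₂) = ⁅faceEl H a F₁, faceEl H b F₂⁆ := by
  funext ω
  simp only [faceEl, commutatorElement_def, Pi.mul_apply, Pi.inv_apply, Set.mem_inter_iff]
  by_cases h1 : ω ∈ F₁ <;> by_cases h2 : ω ∈ F₂ <;> simp [h1, h2]

/-- The group homomorphism `g ↦ [g]_F`. -/
noncomputable def faceHom (H : Type*) [Group H] {ℓ : ℕ} (F : Set (Fin ℓ → Bool)) :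
    H →* ((Fin ℓ → Bool) → H) where
  toFun g := faceEl H g F
  map_one' := by funext ω; simp [faceEl]
  map_mul' a b := by funext ω; by_cases hω : ω ∈ F <;> simp [faceEl, hω]

lemma faceEl_corner_mem_hostKra (H : Type*) [Group H] (ℓ : ℕ) :
    ∀ k : ℕ, k < ℓ → ∀ g ∈ (⊤ : Subgroup H).lowerCentralSeries k,
      faceEl H g {ω : Fin ℓ → Bool | ∀ i : Fin ℓ, (i : ℕ) ≤ k → ω i = true} ∈ hostKra H ℓ := by
  intro k
  induction k with
  | zero =>
    intro hk g _
    apply Subgroup.subset_closure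
    refine ⟨g, _, ⟨⟨0, hk⟩, true, ?_⟩, rfl⟩
    ext ω
    simp only [Set.mem_setOf_eq]
    constructor
    · intro h'
      exact h' ⟨0, hk⟩ le_rfl
    · intro h' i hi
      have : i = ⟨0, hk⟩ := Fin.ext (Nat.le_zero.mp hi)
      rw [this]; exact h'
  | succ k ih =>
    intro hk g hg
    have hkℓ : k < ℓ := Nat.lt_of_succ_lt hk
    set F₁ : Set (Fin ℓ → Bool) := {ω | ∀ i : Fin ℓ, (i : ℕ) ≤ k → ω i = true} with hF₁
    set F₂ : Set (Fin ℓ → Bool) := {ω | ω ⟨k + 1, hk⟩ = true} with hF₂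
    have hF : {ω : Fin ℓ → Bool | ∀ i : Fin ℓ, (i : ℕ) ≤ k + 1 → ω i = true} = F₁ ∩ F₂ := by
      ext ω
      simp only [Set.mem_setOf_eq, Set.mem_inter_iff, hF₁, hF₂]
      constructor
      · intro h'
        exact ⟨fun i hi => h' i (le_trans hi (Nat.le_succ k)), h' ⟨k + 1, hk⟩ le_rfl⟩
      · rintro ⟨h1, h2⟩ i hi
        rcases Nat.lt_or_ge (i : ℕ) (k + 1) with h' | h'
        · exact h1 i (Nat.lt_succ_iff.mp h')
        · have : i = ⟨k + 1, hk⟩ := Fin.ext (le_antisymm hi h')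
          rw [this]; exact h2
    rw [hF]
    have hle : (⊤ : Subgroup H).lowerCentralSeries (k + 1) ≤ (hostKra H ℓ).comap (faceHom H (F₁ ∩ F₂)) := by
      rw [Subgroup.lowerCentralSeries_succ, Subgroup.commutator_def]
      apply (Subgroup.closure_le _).mpr
      rintro _ ⟨g₁, hg₁, g₂, -, rfl⟩
      simp only [SetLike.mem_coe, Subgroup.mem_comap]
      show faceEl H (g₁ * g₂ * g₁⁻¹ * g₂⁻¹) (F₁ ∩ F₂) ∈ hostKra H ℓ
      have : g₁ * g₂ * g₁⁻¹ * g₂⁻¹ = ⁅g₁, g₂⁆ := rfl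
      rw [this, faceEl_commutator]
      have m1 : faceEl H g₁ F₁ ∈ hostKra H ℓ := ih hkℓ g₁ hg₁
      have m2 : faceEl H g₂ F₂ ∈ hostKra H ℓ :=
        Subgroup.subset_closure ⟨g₂, F₂, ⟨⟨k + 1, hk⟩, true, rfl⟩, rfl⟩
      rw [commutatorElement_def]
      exact mul_mem (mul_mem (mul_mem m1 m2) (inv_mem m1)) (inv_mem m2)
    exact hle hg

/-- If `h` lies in the `(s+1)`-th term of the lower central series of `H`
(with `H₁ = H`, `H_{i+1} = [H, H_i]`; in Mathlib's indexing `H_{s+1} = lowerCentralSeries H s`),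
then `(x, h • x) ∈ RP^s_H(X)` for every `x`. -/
theorem statement5 {H X : Type*} [Group H] [TopologicalSpace H] [IsTopologicalGroup H]
    [TopologicalSpace.MetrizableSpace H]
    [MetricSpace X] [CompactSpace X] [MulAction H X] [ContinuousSMul H X]
    (s : ℕ) (hs : 1 ≤ s) (h : H) (hh : h ∈ (⊤ : Subgroup H).lowerCentralSeries s) (x : X) :
    (x, h • x) ∈ RP H X s := by
  have hF : {ω : Fin (s + 1) → Bool | ∀ i : Fin (s + 1), (i : ℕ) ≤ s → ω i = true}
      = {fun _ => true} := by
    ext ω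
    simp only [Set.mem_setOf_eq, Set.mem_singleton_iff]
    constructor
    · intro h'
      funext i
      exact h' i (Nat.lt_succ_iff.mp i.isLt)
    · intro h'
      subst h'
      intro i _
      rfl
  have hmem := faceEl_corner_mem_hostKra H (s + 1) s (Nat.lt_succ_self s) h hh
  rw [hF] at hmem
  apply subset_closure
  refine ⟨faceEl H h {(fun _ => true)}, hmem, x, ?_⟩
  funext ω
  simp only [corner, faceEl, Set.mem_singleton_iff]
  by_cases hω : ω = fun _ => true
  · simp [hω]
  · simp [hω]
end

section
/- Let (H,X) be a minimal topological dynamical system with H perfect, i.e. H = [H,H]. Then for every s ≥ 1 the regional proximal relation of order s is everything: RP^s_H(X) = X × X; equivalently, ∟^{s+1}(x;y) ∈ C^{s+1}_H(X) for all x, y ∈ X. -/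
section aux
open scoped commutatorElement
variable {H : Type*} [Group H] {ℓ : ℕ}

lemma faceEl_mul (a b : H) (F : Set (Fin ℓ → Bool)) :
    faceEl H (a * b) F = faceEl H a F * faceEl H b F := by
  ext ω; by_cases h : ω ∈ F <;> simp [faceEl, h]

lemma faceEl_one (F : Set (Fin ℓ → Bool)) : faceEl H (1 : H) F = 1 := by
  ext ω; simp [faceEl]

lemma faceEl_inv (a : H) (F : Set (Fin ℓ → Bool)) :
    faceEl H a⁻¹ F = (faceEl H a F)⁻¹ := by
  ext ω; by_cases h : ω ∈ F <;> simp [faceEl, h]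

/-- The subgroup of `h` with `[h]_F ∈ HK^ℓ(H)`. -/
noncomputable def faceSub (H : Type*) [Group H] (ℓ : ℕ) (F : Set (Fin ℓ → Bool)) :
    Subgroup H where
  carrier := {h | faceEl H h F ∈ hostKra H ℓ}
  mul_mem' := fun ha hb => by
    simpa [Set.mem_setOf_eq, faceEl_mul] using mul_mem ha hb
  one_mem' := by simpa [Set.mem_setOf_eq, faceEl_one] using one_mem (hostKra H ℓ)
  inv_mem' := fun ha => by simpa [Set.mem_setOf_eq, faceEl_inv] using (hostKra H ℓ).inv_mem ha

lemma mem_faceSub_iff {h : H} {F : Set (Fin ℓ → Bool)} :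
    h ∈ faceSub H ℓ F ↔ faceEl H h F ∈ hostKra H ℓ := Iff.rfl

lemma faceEl_commutator_s6 (g h : H) (F F' : Set (Fin ℓ → Bool)) :
    faceEl H ⁅g, h⁆ (F ∩ F') = ⁅faceEl H g F, faceEl H h F'⁆ := by
  ext ω
  simp only [commutatorElement_def, Pi.mul_apply, Pi.inv_apply, faceEl]
  by_cases h1 : ω ∈ F <;> by_cases h2 : ω ∈ F' <;>
    simp [h1, h2, Set.mem_inter_iff]

lemma faceSub_hyperface {F : Set (Fin ℓ → Bool)} (hF : IsHyperface F) :
    faceSub H ℓ F = ⊤ := by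
  rw [eq_top_iff]
  intro h _
  exact Subgroup.subset_closure ⟨h, F, hF, rfl⟩

lemma faceSub_inter (hperf : commutator H = ⊤) {F F' : Set (Fin ℓ → Bool)}
    (hF : faceSub H ℓ F = ⊤) (hF' : faceSub H ℓ F' = ⊤) :
    faceSub H ℓ (F ∩ F') = ⊤ := by
  rw [eq_top_iff, ← hperf, commutator_def, Subgroup.commutator_def, Subgroup.closure_le]
  rintro _ ⟨g, -, h, -, rfl⟩
  have hg : faceEl H g F ∈ hostKra H ℓ :=
    mem_faceSub_iff.mp (show g ∈ faceSub H ℓ F from hF.symm ▸ Subgroup.mem_top g)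
  have hh : faceEl H h F' ∈ hostKra H ℓ :=
    mem_faceSub_iff.mp (show h ∈ faceSub H ℓ F' from hF'.symm ▸ Subgroup.mem_top h)
  show faceEl H ⁅g, h⁆ (F ∩ F') ∈ hostKra H ℓ
  rw [faceEl_commutator_s6, commutatorElement_def]
  exact mul_mem (mul_mem (mul_mem hg hh) (inv_mem hg)) (inv_mem hh)

lemma faceSub_vertex (hperf : commutator H = ⊤) (hℓ : 2 ≤ ℓ) :
    faceSub H ℓ {(fun _ => true : Fin ℓ → Bool)} = ⊤ := by
  have key : ∀ k : ℕ, 1 ≤ k → k ≤ ℓ →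
      faceSub H ℓ {ω : Fin ℓ → Bool | ∀ i : Fin ℓ, (i : ℕ) < k → ω i = true} = ⊤ := by
    intro k
    induction k with
    | zero => omega
    | succ k ih =>
      intro _ hk
      rcases Nat.eq_zero_or_pos k with hk0 | hk1
      · subst hk0
        apply faceSub_hyperface
        refine ⟨⟨0, by omega⟩, true, ?_⟩
        ext ω
        constructor
        · intro hω; exact hω _ (by simp)
        · intro hω i hi
          have : i = ⟨0, by omega⟩ := Fin.ext (by simp only [Fin.val_mk]; omega)
          rw [this]; exact hω
      · have hset : {ω : Fin ℓ → Bool | ∀ i : Fin ℓ, (i : ℕ) < k + 1 → ω i = true}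
            = {ω : Fin ℓ → Bool | ∀ i : Fin ℓ, (i : ℕ) < k → ω i = true}
              ∩ {ω | ω ⟨k, by omega⟩ = true} := by
          ext ω
          constructor
          · intro hω
            exact ⟨fun i hi => hω i (by omega), hω _ (by simp)⟩
          · rintro ⟨h1, h2⟩ i hi
            rcases Nat.lt_or_ge (i : ℕ) k with h | h
            · exact h1 i h
            · have : i = ⟨k, by omega⟩ := Fin.ext (by simp only [Fin.val_mk]; omega)
              rw [this]; exact h2
        rw [hset]
        exact faceSub_inter hperf (ih hk1 (by omega))
          (faceSub_hyperface ⟨⟨k, by omega⟩, true, rfl⟩)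
  have hfin := key ℓ (by omega) le_rfl
  have hset : {ω : Fin ℓ → Bool | ∀ i : Fin ℓ, (i : ℕ) < ℓ → ω i = true}
      = {(fun _ => true : Fin ℓ → Bool)} := by
    ext ω
    simp only [Set.mem_setOf_eq, Set.mem_singleton_iff]
    constructor
    · intro hω; funext i; exact hω i i.isLt
    · intro hω i _; rw [hω]
  rwa [hset] at hfin

end aux

/-- If `(H, X)` is minimal and `H` is perfect (`H = [H,H]`), then the regional
proximal relation of every order `s ≥ 1` is everything. -/

theorem statement6 {H X : Type*} [Group H] [TopologicalSpace H] [IsTopologicalGroup H]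
    [TopologicalSpace.MetrizableSpace H]
    [MetricSpace X] [CompactSpace X] [MulAction H X] [ContinuousSMul H X]
    (hmin : ∀ x : X, Dense (MulAction.orbit H x))
    (hperf : commutator H = ⊤)
    (s : ℕ) (hs : 1 ≤ s) :
    RP H X s = Set.univ := by
  ext ⟨x, y⟩
  simp only [Set.mem_univ, iff_true]
  show corner (s + 1) x y ∈ dynCubes H X (s + 1)
  set ℓ := s + 1 with hℓdef
  have hV : faceSub H ℓ {(fun _ => true : Fin ℓ → Bool)} = ⊤ :=
    faceSub_vertex hperf (by omega)
  have hcont : Continuous fun z : X => corner ℓ x z := by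
    apply continuous_pi
    intro ω
    by_cases hω : ω = (fun _ => true)
    · simp only [corner, hω, ↓reduceIte]
      exact continuous_id
    · simpa [corner, hω] using (continuous_const : Continuous fun _ : X => x)
  have hmaps : Set.MapsTo (fun z : X => corner ℓ x z) (MulAction.orbit H x)
      {c | ∃ γ ∈ hostKra H ℓ, ∃ x0 : X, c = fun ω => γ ω • x0} := by
    rintro _ ⟨h, rfl⟩
    refine ⟨faceEl H h {(fun _ => true : Fin ℓ → Bool)},
      mem_faceSub_iff.mp (show h ∈ faceSub H ℓ _ from hV.symm ▸ Subgroup.mem_top h),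
      x, ?_⟩
    funext ω
    by_cases hω : ω = (fun _ => true) <;> simp [corner, faceEl, hω]
  exact map_mem_closure hcont (hmin x y) hmaps
end
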